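/- There exist a co-c.e. (Π⁰₁) equivalence relation Y on ℕ and computable functions f₁, f₂ (with f₁ constantly 0) such that the equivalence relation Z generated by Y ∪ {(f₁(x), f₂(x)) : x ∈ ℕ} has exactly two equivalence classes, at least one of which is not Π⁰₁; hence Z is not Π⁰₁. -/

import Mathlib

/-- `f` is `(R,S)`-equivalence preserving. -/
def EqvPres (R S : Setoid ℕ) (f : ℕ → ℕ) : Prop :=
  ∀ x y, R.r x y → S.r (f x) (f y)

/-- `α` is a morphism of the category `Eq` from `R` to `S`: a map on quotients
induced by a computable equivalence-preserving function. -/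
def IsMor (R S : Setoid ℕ) (α : Quotient R → Quotient S) : Prop :=
  ∃ f : ℕ → ℕ, Computable f ∧ EqvPres R S f ∧
    ∀ x, α (Quotient.mk R x) = Quotient.mk S (f x)

/-- The equivalence relation generated by a binary relation on ℕ. -/
def genSetoid (r : ℕ → ℕ → Prop) : Setoid ℕ :=
  ⟨Relation.EqvGen r, Relation.EqvGen.is_equivalence r⟩

/-- The relation generating the coequalizer: `Y` together with the pairs `(f₁ x, f₂ x)`. -/
def coeqRel (Y : Setoid ℕ) (f₁ f₂ : ℕ → ℕ) : ℕ → ℕ → Prop :=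
  fun u v => Y.r u v ∨ ∃ x, u = f₁ x ∧ v = f₂ x

/-- A set of naturals is Π⁰₁ if its complement is c.e. -/
def Pi01Set (A : Set ℕ) : Prop := REPred fun n => n ∉ A

/-- An equivalence relation is Π⁰₁ (a coceer) if its graph is co-c.e. -/
def CoCE (R : Setoid ℕ) : Prop := REPred fun p : ℕ × ℕ => ¬ R.r p.1 p.2

section Aux

open Nat.Partrec Nat.Partrec.Code Encodable Denumerable

lemma rePred_of_exists {α} [Primcodable α] {p : α → Prop} {f : α → ℕ → Bool}
    (hf : Computable₂ f) (h : ∀ a, p a ↔ ∃ s, f a s = true) : REPred p := by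
  have hc : Computable₂ fun a s => (if f a s then some () else none : Option Unit) := by
    have := Computable.cond hf (Computable.const (some ())) (Computable.const (none : Option Unit))
    exact Computable₂.mk <| this.of_eq fun p => by cases hfp : f p.1 p.2 <;> simp [hfp]
  have H : Partrec fun a => Nat.rfindOpt (fun s => if f a s then some () else none) :=
    Partrec.rfindOpt hc
  refine H.of_eq fun a => ?_
  apply Part.ext fun u => ?_
  constructor
  · intro hu
    obtain ⟨n, hn⟩ := Nat.rfindOpt_spec hu
    have hfn : f a n = true := by by_contra hf'; simp [hf'] at hn
    exact Part.mem_assert ((h a).2 ⟨n, hfn⟩) (by simp)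
  · intro hu
    have pa : p a := by
      rcases Part.mem_assert_iff.1 hu with ⟨pa, _⟩; exact pa
    obtain ⟨s, hs⟩ := (h a).1 pa
    have dom : (Nat.rfindOpt fun s => (if f a s then some () else none : Option Unit)).Dom :=
      Nat.rfindOpt_dom.2 ⟨s, (), by simp [hs]⟩
    exact ⟨dom, Subsingleton.elim _ _⟩

lemma REPred.comp' {α β} [Primcodable α] [Primcodable β] {p : β → Prop} {g : α → β}
    (hp : REPred p) (hg : Computable g) : REPred fun a => p (g a) :=
  Partrec.comp hp hg

/-- The halting set (at input 0), as a set of naturals. -/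
def KH (e : ℕ) : Prop := (eval (ofNat Code e) 0).Dom

lemma KH_zero : KH 0 := by
  have he : encode Code.zero = 0 := by simp [encodeCode_eq, encodeCode]
  have h0 : (ofNat Code 0) = Code.zero := by
    rw [← he, ofNat_encode]
  simp [KH, h0, eval]
  trivial

lemma KH_iff (e : ℕ) : KH e ↔ ∃ s, (evaln s (ofNat Code e) 0).isSome := by
  constructor
  · intro h
    obtain ⟨x, hx⟩ := Part.dom_iff_mem.1 h
    obtain ⟨s, hs⟩ := evaln_complete.1 hx
    exact ⟨s, by simp [Option.isSome_iff_exists]; exact ⟨x, hs⟩⟩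
  · rintro ⟨s, hs⟩
    obtain ⟨x, hx⟩ := Option.isSome_iff_exists.1 hs
    exact Part.dom_iff_mem.2 ⟨x, evaln_sound hx⟩

lemma KH_not_compl_re : ¬ REPred fun e => ¬ KH e := by
  intro h
  have := h.comp' (Computable.encode : Computable fun c : Code => encode c)
  have : REPred fun c : Code => ¬ (eval c 0).Dom :=
    this.of_eq fun c => by simp [KH, ofNat_encode]
  exact ComputablePred.halting_problem_not_re 0 this

lemma KH_exists_not : ∃ b, ¬ KH b := by
  obtain ⟨c, hc⟩ := exists_code.1 (Partrec.none : Partrec fun _ : ℕ => (Part.none : Part ℕ))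
  refine ⟨encode c, ?_⟩
  simp [KH, ofNat_encode, hc]

/-- The Π⁰₁ setoid: equality on KH, everything outside KH collapsed. -/
def Ysetoid : Setoid ℕ :=
  ⟨fun x y => x = y ∨ (¬ KH x ∧ ¬ KH y), by
    constructor
    · intro x; exact Or.inl rfl
    · rintro x y (rfl | ⟨hx, hy⟩); · exact Or.inl rfl
      · exact Or.inr ⟨hy, hx⟩
    · rintro x y z (rfl | ⟨hx, hy⟩) h2
      · exact h2
      · rcases h2 with rfl | ⟨_, hz⟩
        · exact Or.inr ⟨hx, hy⟩
        · exact Or.inr ⟨hx, hz⟩⟩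

lemma Ysetoid_r (x y : ℕ) : Ysetoid.r x y ↔ (x = y ∨ (¬ KH x ∧ ¬ KH y)) := Iff.rfl

/-- The enumeration of KH. -/
def fKH (n : ℕ) : ℕ :=
  if (evaln n.unpair.2 (ofNat Code n.unpair.1) 0).isSome then n.unpair.1 else 0

lemma fKH_computable : Computable fKH := by
  have h1 : Primrec fun n : ℕ => n.unpair.1 := Primrec.fst.comp Primrec.unpair
  have h2 : Primrec fun n : ℕ => n.unpair.2 := Primrec.snd.comp Primrec.unpair
  have hev : Primrec fun n : ℕ => evaln n.unpair.2 (ofNat Code n.unpair.1) 0 :=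
    primrec_evaln.comp <| (h2.pair ((Primrec.ofNat Code).comp h1)).pair (Primrec.const 0)
  have hc : PrimrecPred fun n : ℕ => (evaln n.unpair.2 (ofNat Code n.unpair.1) 0).isSome := by
    have := Primrec.option_isSome.comp hev
    exact Primrec.primrecPred (this.of_eq fun n => by simp)
  exact (Primrec.ite hc h1 (Primrec.const 0)).to_comp

lemma fKH_mem (n : ℕ) : KH (fKH n) := by
  unfold fKH
  split
  · next h => exact (KH_iff _).2 ⟨n.unpair.2, h⟩
  · exact KH_zero

lemma fKH_surj {e : ℕ} (he : KH e) : ∃ n, fKH n = e := by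
  obtain ⟨s, hs⟩ := (KH_iff e).1 he
  refine ⟨Nat.pair e s, ?_⟩
  simp [fKH, Nat.unpair_pair, hs]

lemma Y_coCE : CoCE Ysetoid := by
  apply rePred_of_exists (f := fun p : ℕ × ℕ => fun s =>
    decide (p.1 ≠ p.2 ∧ ((evaln s (ofNat Code p.1) 0).isSome ∨
      (evaln s (ofNat Code p.2) 0).isSome)))
  · have h1 : Primrec fun a : (ℕ × ℕ) × ℕ => a.1.1 := Primrec.fst.comp Primrec.fst
    have h2 : Primrec fun a : (ℕ × ℕ) × ℕ => a.1.2 := Primrec.snd.comp Primrec.fst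
    have hs : Primrec fun a : (ℕ × ℕ) × ℕ => a.2 := Primrec.snd
    have hne : PrimrecPred fun a : (ℕ × ℕ) × ℕ => a.1.1 ≠ a.1.2 :=
      (Primrec.eq.comp h1 h2).not
    have hev1 : Primrec fun a : (ℕ × ℕ) × ℕ => evaln a.2 (ofNat Code a.1.1) 0 :=
      primrec_evaln.comp <| (hs.pair ((Primrec.ofNat Code).comp h1)).pair (Primrec.const 0)
    have hev2 : Primrec fun a : (ℕ × ℕ) × ℕ => evaln a.2 (ofNat Code a.1.2) 0 :=
      primrec_evaln.comp <| (hs.pair ((Primrec.ofNat Code).comp h2)).pair (Primrec.const 0)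
    have hB1 : PrimrecPred fun a : (ℕ × ℕ) × ℕ => (evaln a.2 (ofNat Code a.1.1) 0).isSome :=
      Primrec.primrecPred ((Primrec.option_isSome.comp hev1).of_eq fun a => by simp)
    have hB2 : PrimrecPred fun a : (ℕ × ℕ) × ℕ => (evaln a.2 (ofNat Code a.1.2) 0).isSome :=
      Primrec.primrecPred ((Primrec.option_isSome.comp hev2).of_eq fun a => by simp)
    exact Computable₂.mk (hne.and (hB1.or hB2)).decide.to_comp
  · rintro ⟨x, y⟩
    simp only [decide_eq_true_eq]
    constructor
    · intro h
      rw [Ysetoid_r] at h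
      push_neg at h
      obtain ⟨hne, hK⟩ := h
      rcases Classical.em (KH x) with hx | hx
      · obtain ⟨s, hs⟩ := (KH_iff x).1 hx
        exact ⟨s, hne, Or.inl hs⟩
      · obtain ⟨s, hs⟩ := (KH_iff y).1 (hK hx)
        exact ⟨s, hne, Or.inr hs⟩
    · rintro ⟨s, hne, hor⟩
      rw [Ysetoid_r]
      push_neg
      refine ⟨hne, fun hx => ?_⟩
      rcases hor with h | h
      · exact absurd ((KH_iff x).2 ⟨s, h⟩) hx
      · exact (KH_iff y).2 ⟨s, h⟩

lemma Z_iff (x y : ℕ) :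
    (genSetoid (coeqRel Ysetoid (fun _ => 0) fKH)).r x y ↔ (KH x ↔ KH y) := by
  show Relation.EqvGen (coeqRel Ysetoid (fun _ => 0) fKH) x y ↔ _
  constructor
  · intro h
    induction h with
    | rel u v huv =>
      rcases huv with (rfl | ⟨hu, hv⟩) | ⟨n, rfl, rfl⟩
      · exact Iff.rfl
      · simp [hu, hv]
      · simp [KH_zero, fKH_mem n]
    | refl => exact Iff.rfl
    | symm _ _ _ ih => exact ih.symm
    | trans _ _ _ _ _ ih1 ih2 => exact ih1.trans ih2
  · intro h
    by_cases hx : KH x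
    · have hy := h.1 hx
      obtain ⟨m, hm⟩ := fKH_surj hx
      obtain ⟨n, hn⟩ := fKH_surj hy
      have zx : Relation.EqvGen (coeqRel Ysetoid (fun _ => 0) fKH) 0 x :=
        Relation.EqvGen.rel _ _ (Or.inr ⟨m, rfl, hm.symm⟩)
      have zy : Relation.EqvGen (coeqRel Ysetoid (fun _ => 0) fKH) 0 y :=
        Relation.EqvGen.rel _ _ (Or.inr ⟨n, rfl, hn.symm⟩)
      exact Relation.EqvGen.trans _ _ _ (Relation.EqvGen.symm _ _ zx) zy
    · have hy : ¬ KH y := fun h' => hx (h.2 h')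
      exact Relation.EqvGen.rel _ _ (Or.inl (Or.inr ⟨hx, hy⟩))

end Aux

/-- There are a Π⁰₁ equivalence relation `Y` and computable `f₁, f₂` with `f₁`
constantly `0` such that the equivalence relation `Z` generated by
`Y ∪ {(f₁ x, f₂ x)}` has exactly two classes, one of which is not Π⁰₁,
and hence `Z` is not Π⁰₁. -/
theorem stmt_14 :
    ∃ (Y : Setoid ℕ) (f₁ f₂ : ℕ → ℕ),
      CoCE Y ∧ Computable f₁ ∧ Computable f₂ ∧ (∀ x, f₁ x = 0) ∧
      (∃ a b : ℕ, ¬ (genSetoid (coeqRel Y f₁ f₂)).r a b ∧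
        ∀ x, (genSetoid (coeqRel Y f₁ f₂)).r x a ∨ (genSetoid (coeqRel Y f₁ f₂)).r x b) ∧
      (∃ a : ℕ, ¬ Pi01Set {x | (genSetoid (coeqRel Y f₁ f₂)).r x a}) ∧
      ¬ CoCE (genSetoid (coeqRel Y f₁ f₂)) := by
  obtain ⟨b, hb⟩ := KH_exists_not
  refine ⟨Ysetoid, (fun _ => 0), fKH, Y_coCE, Computable.const 0, fKH_computable,
    fun _ => rfl, ⟨0, b, ?_, ?_⟩, ⟨0, ?_⟩, ?_⟩
  · rw [Z_iff]; simp [KH_zero, hb]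
  · intro x
    rw [Z_iff, Z_iff]
    by_cases h : KH x <;> simp [h, KH_zero, hb]
  · intro h
    apply KH_not_compl_re
    exact h.of_eq fun n => by simp [Set.mem_setOf_eq, Z_iff, KH_zero]
  · intro h
    have h2 := h.comp' (Computable.id.pair (Computable.const 0))
    exact KH_not_compl_re (h2.of_eq fun n => by simp [Z_iff, KH_zero])
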